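/- Let a, b, c be integers with 0 ≤ a, b < c and let d = (1−a−b) mod c. If the tetrahedron T_{a,b,c} is empty, then gcd(a,c) = gcd(b,c) = gcd(d,c) = 1 and at least one of a = 1, b = 1, c = 1, d = 1 holds. -/

import Mathlib

/-- A point of `ℝ³` is a lattice point if all of its coordinates are integers. -/
def IsLatticePt (x : Fin 3 → ℝ) : Prop := ∀ i, ∃ m : ℤ, x i = (m : ℝ)

/-- The tetrahedron `T_{a,b,c}`: the convex hull of `(0,0,0)`, `(1,0,0)`, `(0,1,0)`, `(a,b,c)`. -/
def Tet (a b c : ℤ) : Set (Fin 3 → ℝ) :=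
  convexHull ℝ {![0,0,0], ![1,0,0], ![0,1,0], ![(a : ℝ), (b : ℝ), (c : ℝ)]}

/-- `T_{a,b,c}` is an empty lattice tetrahedron: it contains no point of `ℤ³`
other than its four vertices. -/
def TetIsEmpty (a b c : ℤ) : Prop :=
  ∀ x ∈ Tet a b c, IsLatticePt x →
    x = ![0,0,0] ∨ x = ![1,0,0] ∨ x = ![0,1,0] ∨ x = ![(a : ℝ), (b : ℝ), (c : ℝ)]

/- helper: congruence plus range determines emod -/
private lemma modeq_eq {c x y : ℤ} (hdvd : c ∣ x - y) (h0 : 0 ≤ y) (h1 : y < c) :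
    x % c = y := by
  obtain ⟨t, ht⟩ := hdvd
  have hx : x = y + c * t := by linarith
  rw [hx, Int.add_mul_emod_self_left, Int.emod_eq_of_lt h0 h1]

private lemma kx_pos {c x k : ℤ} (hc : 0 < c) (hco : IsCoprime c x) (hk1 : 1 ≤ k) (hk2 : k < c) :
    0 < (k * x) % c := by
  rcases (Int.emod_nonneg (k*x) (ne_of_gt hc)).lt_or_eq with h | h
  · exact h
  · exfalso
    have hdvd : c ∣ k * x := Int.dvd_of_emod_eq_zero h.symm
    have h2 := hco.dvd_of_dvd_mul_right hdvd
    have := Int.le_of_dvd (by linarith) h2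
    linarith

/- the pairing (k ↦ c - k) -/
private lemma pair_emod {c x k : ℤ} (hc : 0 < c) (h : 0 < (k*x) % c) :
    ((c - k) * x) % c = c - (k*x) % c := by
  have e := Int.mul_ediv_add_emod (k*x) c
  have h2 := Int.emod_lt_of_pos (k*x) hc
  exact modeq_eq ⟨x - (k*x)/c - 1, by linear_combination e⟩ (by linarith) (by linarith)

/- Part I : emptiness gives the basic inequality -/
private lemma star_of_empty (a b c : ℤ) (ha : 0 ≤ a) (hac : a < c) (hb : 0 ≤ b) (hbc : b < c)
    (hempty : TetIsEmpty a b c) :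
    ∀ k : ℤ, 1 ≤ k → k ≤ c - 1 → k < k*a % c + k*b % c := by
  intro k hk1 hk2
  by_contra hle
  push_neg at hle
  have hc0 : (0:ℤ) < c := by linarith
  set r := k*a % c with hrdef
  set s := k*b % c with hsdef
  have hr0 : 0 ≤ r := Int.emod_nonneg _ (ne_of_gt hc0)
  have hs0 : 0 ≤ s := Int.emod_nonneg _ (ne_of_gt hc0)
  have ea := Int.mul_ediv_add_emod (k*a) c
  have eb := Int.mul_ediv_add_emod (k*b) c
  set X : ℤ := a - k*a / c with hXdef
  set Y : ℤ := b - k*b / c with hYdef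
  set K : ℤ := c - k with hKdef
  set p : Fin 3 → ℝ := ![(X:ℝ), (Y:ℝ), (K:ℝ)] with hpdef
  -- the four vertices
  set v0 : Fin 3 → ℝ := ![0,0,0] with hv0
  set v1 : Fin 3 → ℝ := ![1,0,0] with hv1
  set v2 : Fin 3 → ℝ := ![0,1,0] with hv2
  set v3 : Fin 3 → ℝ := ![(a:ℝ), (b:ℝ), (c:ℝ)] with hv3
  have hcR : (0:ℝ) < (c:ℝ) := by exact_mod_cast hc0
  have hcne : ((c:ℝ)) ≠ 0 := ne_of_gt hcR
  -- integer identities for coordinates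
  have hXint : c * X = r + (c - k) * a := by
    rw [hXdef]; linear_combination -ea
  have hYint : c * Y = s + (c - k) * b := by
    rw [hYdef]; linear_combination -eb
  -- membership
  have hmem : p ∈ Tet a b c := by
    have hconv : Convex ℝ (Tet a b c) := convex_convexHull ℝ _
    set w : Fin 4 → ℝ := ![((k:ℝ) - r - s)/c, (r:ℝ)/c, (s:ℝ)/c, ((c:ℝ)-k)/c] with hw
    set z : Fin 4 → (Fin 3 → ℝ) := ![v0, v1, v2, v3] with hz
    have hmem0 : ∀ i : Fin 4, z i ∈ Tet a b c := by
      intro i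
      apply subset_convexHull
      fin_cases i <;> simp [hz, Tet, Set.mem_insert_iff, hv0, hv1, hv2, hv3]
    have n0 : (0:ℝ) ≤ (k:ℝ) - (r:ℝ) - (s:ℝ) := by
      have h : (0:ℤ) ≤ k - r - s := by linarith
      exact_mod_cast h
    have n1 : (0:ℝ) ≤ (r:ℝ) := by exact_mod_cast hr0
    have n2 : (0:ℝ) ≤ (s:ℝ) := by exact_mod_cast hs0
    have n3 : (0:ℝ) ≤ (c:ℝ) - (k:ℝ) := by
      have h : (0:ℤ) ≤ c - k := by linarith
      exact_mod_cast h
    have hw0 : ∀ i ∈ (Finset.univ : Finset (Fin 4)), 0 ≤ w i := by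
      intro i _
      fin_cases i
      · exact div_nonneg n0 hcR.le
      · exact div_nonneg n1 hcR.le
      · exact div_nonneg n2 hcR.le
      · exact div_nonneg n3 hcR.le
    have hw1 : ∑ i : Fin 4, w i = 1 := by
      rw [Fin.sum_univ_four]
      simp only [hw, Matrix.cons_val_zero, Matrix.cons_val_one, Matrix.head_cons,
        Matrix.cons_val_two, Matrix.tail_cons, Matrix.cons_val_three]
      field_simp
      ring
    have hsum := hconv.sum_mem hw0 hw1 (fun i _ => hmem0 i)
    have hpeq : p = ∑ i : Fin 4, w i • z i := by
      funext j
      rw [Fin.sum_univ_four]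
      have hXR : (c:ℝ) * (X:ℝ) = (r:ℝ) + ((c:ℝ) - (k:ℝ)) * (a:ℝ) := by exact_mod_cast hXint
      have hYR : (c:ℝ) * (Y:ℝ) = (s:ℝ) + ((c:ℝ) - (k:ℝ)) * (b:ℝ) := by exact_mod_cast hYint
      fin_cases j
      · simp only [hpdef, hw, hz, hv0, hv1, hv2, hv3, Pi.smul_apply,
          Matrix.cons_val_zero, Matrix.cons_val_one, Matrix.head_cons, smul_eq_mul, Pi.add_apply, Matrix.cons_val, Fin.isValue, Fin.zero_eta, Fin.mk_one]
        field_simp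
        linear_combination hXR
      · simp only [hpdef, hw, hz, hv0, hv1, hv2, hv3, Pi.smul_apply,
          Matrix.cons_val_zero, Matrix.cons_val_one, Matrix.head_cons, smul_eq_mul, Pi.add_apply, Matrix.cons_val, Fin.isValue, Fin.zero_eta, Fin.mk_one]
        field_simp
        linear_combination hYR
      · simp only [hpdef, hw, hz, hv0, hv1, hv2, hv3, Pi.smul_apply,
          Matrix.cons_val_two, Matrix.tail_cons, Matrix.head_cons, smul_eq_mul, Pi.add_apply, Matrix.cons_val, Fin.isValue]
        field_simp
        rw [hKdef]
        push_cast
        ring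
    rw [hpeq]
    exact hsum
  -- p is a lattice point
  have hlat : IsLatticePt p := by
    intro i
    fin_cases i
    · exact ⟨X, by simp [hpdef]⟩
    · exact ⟨Y, by simp [hpdef]⟩
    · exact ⟨K, by simp [hpdef]⟩
  have hK1 : 1 ≤ K := by omega
  have hKc : K ≤ c - 1 := by omega
  rcases hempty p hmem hlat with h | h | h | h
  · have := congrFun h 2
    simp [hpdef, hv0] at this
    have : K = 0 := by exact_mod_cast this
    omega
  · have := congrFun h 2
    simp [hpdef] at this
    have : K = 0 := by exact_mod_cast this
    omega
  · have := congrFun h 2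
    simp [hpdef] at this
    have : K = 0 := by exact_mod_cast this
    omega
  · have := congrFun h 2
    simp [hpdef] at this
    have : K = c := by exact_mod_cast this
    omega

/- gcd(a,c)=1 -/
private lemma gcd_one (a b c : ℤ) (hc : 2 ≤ c)
    (hstar : ∀ k : ℤ, 1 ≤ k → k ≤ c - 1 → k < k*a % c + k*b % c) :
    Int.gcd a c = 1 := by
  by_contra hg
  have hc0 : (0:ℤ) < c := by linarith
  have hgc : (Int.gcd a c : ℤ) ∣ c := Int.gcd_dvd_right a c
  have hga : (Int.gcd a c : ℤ) ∣ a := Int.gcd_dvd_left a c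
  have hgne : Int.gcd a c ≠ 0 := by
    intro h0
    have := (Int.gcd_eq_zero_iff.mp h0).2
    omega
  have hg2 : (2:ℤ) ≤ (Int.gcd a c : ℤ) := by
    have : 1 ≤ Int.gcd a c := Nat.one_le_iff_ne_zero.mpr hgne
    have h1 : Int.gcd a c ≠ 1 := hg
    omega
  obtain ⟨k, hk⟩ := hgc
  obtain ⟨a', ha'⟩ := hga
  set g : ℤ := (Int.gcd a c : ℤ) with hgdef
  have hk1 : 1 ≤ k := by nlinarith
  have hkc : k ≤ c - 1 := by nlinarith
  have hka : (k*a) % c = 0 := by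
    have : k * a = c * a' := by rw [hk, ha']; ring
    rw [this]; exact Int.mul_emod_right c a'
  have hcka : ((c-k)*a) % c = 0 := by
    have : (c-k) * a = c * (a - a') := by rw [hk] at *; nlinarith [ha']
    rw [this]; exact Int.mul_emod_right _ _
  have h1 := hstar k hk1 hkc
  rw [hka] at h1
  have h2 := hstar (c-k) (by linarith) (by linarith)
  rw [hcka] at h2
  have hs : ((c-k)*b) % c = c - (k*b) % c := pair_emod hc0 (by linarith)
  rw [hs] at h2
  linarith

private lemma gcd_d_one (a b c d : ℤ) (hc : 2 ≤ c) (hd0 : 0 ≤ d) (hdc : d < c)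
    (hsum : c ∣ a + b + d - 1)
    (hstar : ∀ k : ℤ, 1 ≤ k → k ≤ c - 1 → k < k*a % c + k*b % c) :
    Int.gcd d c = 1 := by
  by_contra hg
  have hc0 : (0:ℤ) < c := by linarith
  have hgc : (Int.gcd d c : ℤ) ∣ c := Int.gcd_dvd_right d c
  have hgd : (Int.gcd d c : ℤ) ∣ d := Int.gcd_dvd_left d c
  have hgne : Int.gcd d c ≠ 0 := by
    intro h0
    have := (Int.gcd_eq_zero_iff.mp h0).2
    omega
  have hg2 : (2:ℤ) ≤ (Int.gcd d c : ℤ) := by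
    have : 1 ≤ Int.gcd d c := Nat.one_le_iff_ne_zero.mpr hgne
    have h1 : Int.gcd d c ≠ 1 := hg
    omega
  obtain ⟨k, hk⟩ := hgc
  obtain ⟨d', hd'⟩ := hgd
  set g : ℤ := (Int.gcd d c : ℤ) with hgdef
  have hk1 : 1 ≤ k := by nlinarith
  have hkc : k ≤ c - 1 := by nlinarith
  have hkd : c ∣ k * d := ⟨d', by rw [hk, hd']; ring⟩
  -- r + s ≡ k mod c
  set r := (k*a) % c with hr
  set s := (k*b) % c with hs
  have ea := Int.mul_ediv_add_emod (k*a) c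
  have eb := Int.mul_ediv_add_emod (k*b) c
  obtain ⟨t, ht⟩ := hsum
  obtain ⟨u, hu⟩ := hkd
  have hdvd : c ∣ r + s - k :=
    ⟨k*t - u - (k*a)/c - (k*b)/c, by linear_combination ea + eb + k*ht - hu⟩
  have hr0 : 0 ≤ r := Int.emod_nonneg _ (ne_of_gt hc0)
  have hs0 : 0 ≤ s := Int.emod_nonneg _ (ne_of_gt hc0)
  have hrc : r < c := Int.emod_lt_of_pos _ hc0
  have hsc : s < c := Int.emod_lt_of_pos _ hc0
  have h1 := hstar k hk1 hkc
  obtain ⟨w, hw⟩ := hdvd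
  have hw1 : w = 1 := by nlinarith
  have hrs : r + s = k + c := by rw [hw1] at hw; linarith
  -- now at c - k
  have h2 := hstar (c-k) (by linarith) (by linarith)
  have hra : ((c-k)*a) % c = c - r := pair_emod hc0 (by linarith)
  have hrb : ((c-k)*b) % c = c - s := pair_emod hc0 (by linarith)
  rw [hra, hrb] at h2
  linarith

/- the refined identity (∗∗) -/
private lemma sstar (a b c d : ℤ) (hc : 2 ≤ c)
    (hsum : c ∣ a + b + d - 1)
    (hca : IsCoprime c a) (hcb : IsCoprime c b) (hcd : IsCoprime c d)
    (hstar : ∀ k : ℤ, 1 ≤ k → k ≤ c - 1 → k < k*a % c + k*b % c) :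
    ∀ k : ℤ, 1 ≤ k → k ≤ c - 1 → k*a % c + k*b % c + k*d % c = k + c := by
  have hc0 : (0:ℤ) < c := by linarith
  obtain ⟨t, ht⟩ := hsum
  -- S k - k is a positive multiple of c
  have key : ∀ k : ℤ, 1 ≤ k → k ≤ c - 1 →
      ∃ w : ℤ, 1 ≤ w ∧ k*a % c + k*b % c + k*d % c - k = c * w := by
    intro k hk1 hk2
    have ea := Int.mul_ediv_add_emod (k*a) c
    have eb := Int.mul_ediv_add_emod (k*b) c
    have ed := Int.mul_ediv_add_emod (k*d) c
    have hdvd : ∃ w : ℤ, k*a % c + k*b % c + k*d % c - k = c * w :=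
      ⟨k*t - (k*a)/c - (k*b)/c - (k*d)/c, by linear_combination ea + eb + ed + k*ht⟩
    obtain ⟨w, hw⟩ := hdvd
    refine ⟨w, ?_, hw⟩
    have h1 := hstar k hk1 hk2
    have h2 := kx_pos hc0 hcd hk1 (by linarith)
    nlinarith
  intro k hk1 hk2
  obtain ⟨w, hw1, hw⟩ := key k hk1 hk2
  obtain ⟨w', hw1', hw'⟩ := key (c-k) (by linarith) (by linarith)
  have hpa : ((c-k)*a) % c = c - (k*a) % c := pair_emod hc0 (kx_pos hc0 hca hk1 (by linarith))
  have hpb : ((c-k)*b) % c = c - (k*b) % c := pair_emod hc0 (kx_pos hc0 hcb hk1 (by linarith))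
  have hpd : ((c-k)*d) % c = c - (k*d) % c := pair_emod hc0 (kx_pos hc0 hcd hk1 (by linarith))
  rw [hpa, hpb, hpd] at hw'
  -- c*w + c*w' = 2c, both ≥ 1, so w = 1
  have hww : w = 1 := by nlinarith
  rw [hww] at hw; linarith

/- step lemma -/
private lemma step_emod {c x : ℤ} (k : ℤ) (hc : 0 < c) (hx0 : 0 ≤ x) (hxc : x < c) :
    (k*x % c = (k-1)*x % c + x ∧ x ≤ k*x % c) ∨
    (k*x % c = (k-1)*x % c + x - c ∧ k*x % c < x) := by
  have e := Int.mul_ediv_add_emod ((k-1)*x) c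
  have hp0 : 0 ≤ (k-1)*x % c := Int.emod_nonneg _ (ne_of_gt hc)
  have hpc : (k-1)*x % c < c := Int.emod_lt_of_pos _ hc
  by_cases hcase : (k-1)*x % c + x < c
  · left
    have he : k*x % c = (k-1)*x % c + x :=
      modeq_eq ⟨(k-1)*x / c, by linear_combination -e⟩ (by linarith) hcase
    exact ⟨he, by linarith⟩
  · right
    have he : k*x % c = (k-1)*x % c + x - c :=
      modeq_eq ⟨(k-1)*x / c + 1, by linear_combination -e⟩ (by linarith) (by linarith)
    exact ⟨he, by linarith⟩

/- exactly one wrap per step -/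
private lemma exactOne (a b c d : ℤ) (hc : 2 ≤ c)
    (ha0 : 0 ≤ a) (hac : a < c) (hb0 : 0 ≤ b) (hbc : b < c) (hd0 : 0 ≤ d) (hdc : d < c)
    (hsum1 : a + b + d = c + 1)
    (hss : ∀ k : ℤ, 1 ≤ k → k ≤ c - 1 → k*a % c + k*b % c + k*d % c = k + c) :
    ∀ k : ℤ, 2 ≤ k → k ≤ c - 1 →
      ((k*a % c < a ∧ ¬(k*b % c < b) ∧ ¬(k*d % c < d)) ∨
       (¬(k*a % c < a) ∧ k*b % c < b ∧ ¬(k*d % c < d)) ∨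
       (¬(k*a % c < a) ∧ ¬(k*b % c < b) ∧ k*d % c < d)) := by
  intro k hk2 hkc
  have hc0 : (0:ℤ) < c := by linarith
  have hsk := hss k (by linarith) hkc
  have hsk1 := hss (k-1) (by linarith) (by linarith)
  have sa := step_emod (c := c) (x := a) k hc0 ha0 hac
  have sb := step_emod (c := c) (x := b) k hc0 hb0 hbc
  have sd := step_emod (c := c) (x := d) k hc0 hd0 hdc
  rcases sa with ⟨ea, fa⟩ | ⟨ea, fa⟩ <;> rcases sb with ⟨eb, fb⟩ | ⟨eb, fb⟩ <;>
    rcases sd with ⟨ed, fd⟩ | ⟨ed, fd⟩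
  · exfalso; linarith
  · exact Or.inr (Or.inr ⟨not_lt.mpr fa, not_lt.mpr fb, fd⟩)
  · exact Or.inr (Or.inl ⟨not_lt.mpr fa, fb, not_lt.mpr fd⟩)
  · exfalso; linarith
  · exact Or.inl ⟨fa, not_lt.mpr fb, not_lt.mpr fd⟩
  · exfalso; linarith
  · exfalso; linarith
  · exfalso; linarith

/- the core descent lemma -/
private lemma core (A B D c : ℤ) (hc : 2 ≤ c)
    (hA2 : 2 ≤ A) (hB2 : 2 ≤ B) (hD2 : 2 ≤ D)
    (hsum : A + B + D = c + 1) (h2A : c < 2*A)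
    (hcA : IsCoprime c A) (hcB : IsCoprime c B)
    (H : ∀ k : ℤ, 2 ≤ k → k ≤ c - 1 → (k*B % c < B) → ¬ (k*A % c < A)) :
    B ≤ D - 1 := by
  have hc0 : (0:ℤ) < c := by linarith
  set m : ℤ := c - 1 - A with hm
  have hmBD : m = B + D - 2 := by omega
  have hm2 : 2 ≤ m := by omega
  have hAm : m + 2 ≤ A := by omega
  have hBc : B ≤ c - 3 := by omega
  obtain ⟨u, v, huv⟩ := hcB
  set e : ℤ := (-(v*A)) % c with he
  have he2 := Int.mul_ediv_add_emod (-(v*A)) c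
  have he0 : 0 ≤ e := Int.emod_nonneg _ (ne_of_gt hc0)
  have hec : e < c := Int.emod_lt_of_pos _ hc0
  have KC : ∀ j : ℤ, 1 ≤ j → j ≤ B - 1 → 1 ≤ (j*e) % c ∧ (j*e) % c ≤ m := by
    intro j hj1 hj2
    set k : ℤ := (j*v) % c with hk
    have hk0 : 0 ≤ k := Int.emod_nonneg _ (ne_of_gt hc0)
    have hkc : k < c := Int.emod_lt_of_pos _ hc0
    have e1 := Int.mul_ediv_add_emod (j*v) c
    have hkb : (k*B) % c = j := by
      refine modeq_eq ⟨-(j*u) - B*((j*v)/c), by linear_combination B*e1 + j*huv⟩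
        (by linarith) (by linarith)
    have hk2 : 2 ≤ k := by
      have h0 : k ≠ 0 := by
        intro h0; rw [h0] at hkb; simp at hkb; omega
      have h1 : k ≠ 1 := by
        intro h1; rw [h1, one_mul, Int.emod_eq_of_lt (by linarith) (by linarith)] at hkb
        omega
      omega
    have hH := H k hk2 (by linarith) (by rw [hkb]; linarith)
    have hAk : A + 1 ≤ (k*A) % c := by
      have h1 : A ≤ (k*A) % c := not_lt.mp hH
      by_contra hcon; push_neg at hcon
      have heq : (k*A) % c = A := le_antisymm (by linarith) h1
      have e3 := Int.mul_ediv_add_emod (k*A) c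
      have hdvd : c ∣ (k-1)*A := ⟨(k*A)/c, by linear_combination heq - e3⟩
      have hdvd2 : c ∣ (k-1) := hcA.dvd_of_dvd_mul_right hdvd
      have := Int.le_of_dvd (by linarith) hdvd2
      linarith
    have hkAc : (k*A) % c < c := Int.emod_lt_of_pos _ hc0
    have hje : (j*e) % c = c - (k*A) % c := by
      have e3 := Int.mul_ediv_add_emod (k*A) c
      refine modeq_eq ⟨-(j*((-(v*A))/c)) - ((j*v)/c)*A - (k*A)/c - 1, ?_⟩
        (by linarith) (by linarith)
      linear_combination j*he2 + A*e1 + e3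
    rw [hje]; omega
  have hg1 : 1 ≤ e ∧ e ≤ m := by
    have h := KC 1 le_rfl (by linarith)
    rwa [one_mul, Int.emod_eq_of_lt he0 hec] at h
  have lin : ∀ j : ℤ, 1 ≤ j → (j ≤ B - 1 → (j*e) % c = j*e ∧ j*e ≤ m) := by
    refine fun j hj1 => Int.le_induction (motive := fun j _ => j ≤ B - 1 → (j*e) % c = j*e ∧ j*e ≤ m) ?_ ?_ j hj1
    · intro _
      rw [one_mul, Int.emod_eq_of_lt he0 hec]
      exact ⟨rfl, hg1.2⟩
    · intro n hn ih hn2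
      have ihn := ih (by linarith)
      have hexp : (n+1)*e = n*e + e := by ring
      have hle : (n+1)*e ≤ 2*m := by rw [hexp]; linarith [ihn.2, hg1.2]
      have h0 : 0 ≤ (n+1)*e := mul_nonneg (by linarith) he0
      have hlt : (n+1)*e < c := by omega
      have hmod : ((n+1)*e) % c = (n+1)*e := Int.emod_eq_of_lt h0 hlt
      have hub := (KC (n+1) (by linarith) hn2).2
      rw [hmod] at hub
      exact ⟨hmod, hub⟩
  have hfin := lin (B-1) (by linarith) le_rfl
  have hexpB : B*e = (B-1)*e + e := by ring
  have hBe : (B*e) % c = m + 1 := by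
    refine modeq_eq ⟨u*A - B*((-(v*A))/c) - 1, ?_⟩ (by linarith) (by linarith)
    linear_combination B*he2 - A*huv
  have hBe2 : (B*e) % c = B*e :=
    Int.emod_eq_of_lt (by rw [hexpB]; linarith [hfin.2, hg1.1, mul_nonneg (by linarith : (0:ℤ) ≤ B - 1) he0])
      (by rw [hexpB]; linarith [hfin.2, hg1.2])
  have hBem : B*e = m + 1 := by rw [hBe2] at hBe; exact hBe
  have hD1 : B*(e-1) = D - 1 := by
    have : B*(e-1) = B*e - B := by ring
    omega
  have he2' : 2 ≤ e := by nlinarith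
  nlinarith


/-- **White's theorem, necessity.** If `0 ≤ a, b < c`, `d = (1 - a - b) mod c`, and the
tetrahedron `T_{a,b,c}` is empty, then `gcd(a,c) = gcd(b,c) = gcd(d,c) = 1` and at least one
of `a = 1`, `b = 1`, `c = 1`, `d = 1` holds. -/
theorem stmt_2 (a b c d : ℤ) (ha : 0 ≤ a) (hac : a < c) (hb : 0 ≤ b) (hbc : b < c)
    (hd : d = (1 - a - b) % c)
    (hempty : TetIsEmpty a b c) :
    Int.gcd a c = 1 ∧ Int.gcd b c = 1 ∧ Int.gcd d c = 1 ∧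
      (a = 1 ∨ b = 1 ∨ c = 1 ∨ d = 1) := by
  have hc0 : (0:ℤ) < c := by linarith
  have hd0 : 0 ≤ d := by rw [hd]; exact Int.emod_nonneg _ (ne_of_gt hc0)
  have hdc : d < c := by rw [hd]; exact Int.emod_lt_of_pos _ hc0
  by_cases hc1 : c = 1
  · subst hc1
    have ha0 : a = 0 := by omega
    have hb0 : b = 0 := by omega
    have hd0' : d = 0 := by omega
    refine ⟨?_, ?_, ?_, Or.inr (Or.inr (Or.inl rfl))⟩ <;> simp [ha0, hb0, hd0']
  · have hc2 : (2:ℤ) ≤ c := by omega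
    have hstar := star_of_empty a b c ha hac hb hbc hempty
    have hsumdvd : c ∣ a + b + d - 1 := by
      have e := Int.mul_ediv_add_emod (1 - a - b) c
      exact ⟨-((1-a-b)/c), by linear_combination hd + e⟩
    have hga : Int.gcd a c = 1 := gcd_one a b c hc2 hstar
    have hgb : Int.gcd b c = 1 := gcd_one b a c hc2
      (fun k h1 h2 => by have := hstar k h1 h2; linarith)
    have hgd : Int.gcd d c = 1 := gcd_d_one a b c d hc2 hd0 hdc hsumdvd hstar
    have hca : IsCoprime c a := (Int.isCoprime_iff_gcd_eq_one.mpr hga).symm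
    have hcb : IsCoprime c b := (Int.isCoprime_iff_gcd_eq_one.mpr hgb).symm
    have hcd : IsCoprime c d := (Int.isCoprime_iff_gcd_eq_one.mpr hgd).symm
    refine ⟨hga, hgb, hgd, ?_⟩
    by_contra hcon
    push_neg at hcon
    obtain ⟨ha1, hb1, hc1', hd1⟩ := hcon
    have hss := sstar a b c d hc2 hsumdvd hca hcb hcd hstar
    have hA1 : 1 ≤ a := by
      have h := kx_pos hc0 hca le_rfl (by omega)
      rwa [one_mul, Int.emod_eq_of_lt ha hac] at h
    have hB1 : 1 ≤ b := by
      have h := kx_pos hc0 hcb le_rfl (by omega)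
      rwa [one_mul, Int.emod_eq_of_lt hb hbc] at h
    have hD1 : 1 ≤ d := by
      have h := kx_pos hc0 hcd le_rfl (by omega)
      rwa [one_mul, Int.emod_eq_of_lt hd0 hdc] at h
    have hA2 : 2 ≤ a := by omega
    have hB2 : 2 ≤ b := by omega
    have hD2 : 2 ≤ d := by omega
    have hsum1 : a + b + d = c + 1 := by
      have h := hss 1 le_rfl (by omega)
      rw [one_mul, one_mul, one_mul, Int.emod_eq_of_lt ha hac, Int.emod_eq_of_lt hb hbc,
        Int.emod_eq_of_lt hd0 hdc] at h
      linarith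
    have hc5 : (5:ℤ) ≤ c := by omega
    have hEO := exactOne a b c d hc2 ha hac hb hbc hd0 hdc hsum1 hss
    have conv : ∀ x : ℤ, 2 ≤ x → x < c → IsCoprime c x → (2*x % c < x) → c < 2*x := by
      intro x hx2 hxc hcx hlt
      by_contra hge
      push_neg at hge
      rcases lt_or_eq_of_le hge with hlt2 | heq
      · rw [Int.emod_eq_of_lt (by linarith) hlt2] at hlt; linarith
      · have hdvd : x ∣ c := ⟨2, by linarith⟩
        have hu := hcx.isUnit_of_dvd' hdvd dvd_rfl
        rcases Int.isUnit_iff.mp hu with h | h <;> omega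
    have H_ba : ∀ k : ℤ, 2 ≤ k → k ≤ c - 1 → (k*b % c < b) → ¬(k*a % c < a) := by
      intro k h1 h2 hB
      rcases hEO k h1 h2 with ⟨x,y,z⟩|⟨x,y,z⟩|⟨x,y,z⟩
      · exact (y hB).elim
      · exact x
      · exact x
    have H_da : ∀ k : ℤ, 2 ≤ k → k ≤ c - 1 → (k*d % c < d) → ¬(k*a % c < a) := by
      intro k h1 h2 hD
      rcases hEO k h1 h2 with ⟨x,y,z⟩|⟨x,y,z⟩|⟨x,y,z⟩
      · exact (z hD).elim
      · exact x
      · exact x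
    have H_ab : ∀ k : ℤ, 2 ≤ k → k ≤ c - 1 → (k*a % c < a) → ¬(k*b % c < b) := by
      intro k h1 h2 hA
      rcases hEO k h1 h2 with ⟨x,y,z⟩|⟨x,y,z⟩|⟨x,y,z⟩
      · exact y
      · exact (x hA).elim
      · exact y
    have H_db : ∀ k : ℤ, 2 ≤ k → k ≤ c - 1 → (k*d % c < d) → ¬(k*b % c < b) := by
      intro k h1 h2 hD
      rcases hEO k h1 h2 with ⟨x,y,z⟩|⟨x,y,z⟩|⟨x,y,z⟩
      · exact (z hD).elim
      · exact (z hD).elim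
      · exact y
    have H_ad : ∀ k : ℤ, 2 ≤ k → k ≤ c - 1 → (k*a % c < a) → ¬(k*d % c < d) := by
      intro k h1 h2 hA
      rcases hEO k h1 h2 with ⟨x,y,z⟩|⟨x,y,z⟩|⟨x,y,z⟩
      · exact z
      · exact (x hA).elim
      · exact (x hA).elim
    have H_bd : ∀ k : ℤ, 2 ≤ k → k ≤ c - 1 → (k*b % c < b) → ¬(k*d % c < d) := by
      intro k h1 h2 hB
      rcases hEO k h1 h2 with ⟨x,y,z⟩|⟨x,y,z⟩|⟨x,y,z⟩
      · exact (y hB).elim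
      · exact z
      · exact (y hB).elim
    rcases hEO 2 le_rfl (by omega) with ⟨hA,hB,hD⟩|⟨hA,hB,hD⟩|⟨hA,hB,hD⟩
    · have h2a : c < 2*a := conv a hA2 hac hca hA
      have hle1 := core a b d c hc2 hA2 hB2 hD2 hsum1 h2a hca hcb H_ba
      have hle2 := core a d b c hc2 hA2 hD2 hB2 (by linarith) h2a hca hcd H_da
      omega
    · have h2b : c < 2*b := conv b hB2 hbc hcb hB
      have hle1 := core b a d c hc2 hB2 hA2 hD2 (by linarith) h2b hcb hca H_ab
      have hle2 := core b d a c hc2 hB2 hD2 hA2 (by linarith) h2b hcb hcd H_db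
      omega
    · have h2d : c < 2*d := conv d hD2 hdc hcd hD
      have hle1 := core d a b c hc2 hD2 hA2 hB2 (by linarith) h2d hcd hca H_ad
      have hle2 := core d b a c hc2 hD2 hB2 hA2 (by linarith) h2d hcd hcb H_bd
      omega
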